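/- arXiv:1510.05207 — 3 statements merged into one kernel-verified Lean document; each statement's English description precedes it below -/
import Mathlib

section
/- An even-order strictly diagonally dominant real symmetric tensor with all positive diagonal entries is positive definite. -/
open Finset

/-- off-diagonal row sum r_i(A) for a real tensor of order k+1, dimension n -/
noncomputable def rT {n k : ℕ} (A : (Fin (k+1) → Fin n) → ℝ) (i : Fin n) : ℝ :=
  ∑ α ∈ Finset.univ.filter (fun α : Fin k → Fin n => α ≠ fun _ => i),
    |A (Fin.cons i α)|

/-- r_i^j(A) = r_i(A) - |a_{ij...j}| -/
noncomputable def rTj {n k : ℕ} (A : (Fin (k+1) → Fin n) → ℝ) (i j : Fin n) : ℝ :=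
  rT A i - |A (Fin.cons i fun _ => j)|

/-- r_j^{Δ^S}(A): sum over index tuples all lying in S, excluding the diagonal tuple -/
noncomputable def rDelta {n k : ℕ} (A : (Fin (k+1) → Fin n) → ℝ) (S : Finset (Fin n))
    (j : Fin n) : ℝ :=
  ∑ α ∈ Finset.univ.filter (fun α : Fin k → Fin n => (∀ l, α l ∈ S) ∧ α ≠ fun _ => j),
    |A (Fin.cons j α)|

/-- r_j^{Δ^S-complement}(A): sum over index tuples not all lying in S -/
noncomputable def rDeltaC {n k : ℕ} (A : (Fin (k+1) → Fin n) → ℝ) (S : Finset (Fin n))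
    (j : Fin n) : ℝ :=
  ∑ α ∈ Finset.univ.filter (fun α : Fin k → Fin n => ¬ (∀ l, α l ∈ S)),
    |A (Fin.cons j α)|

/-- the tensor is symmetric: entries invariant under permutations of all indices -/
def SymTensor {n k : ℕ} (A : (Fin (k+1) → Fin n) → ℝ) : Prop :=
  ∀ (σ : Equiv.Perm (Fin (k+1))) (f : Fin (k+1) → Fin n), A (f ∘ σ) = A f

/-- λ is an H-eigenvalue of the real tensor A -/
def IsHEig {n k : ℕ} (A : (Fin (k+1) → Fin n) → ℝ) (lam : ℝ) : Prop :=
  ∃ x : Fin n → ℝ, x ≠ 0 ∧ ∀ i,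
    (∑ α : Fin k → Fin n, A (Fin.cons i α) * ∏ l, x (α l)) = lam * (x i) ^ k

theorem stmt15 {n k : ℕ} (hm : Even (k+1))
    (A : (Fin (k+1) → Fin n) → ℝ) (hsym : SymTensor A)
    (hdiag : ∀ i : Fin n, 0 < A (fun _ => i))
    (hdd : ∀ i : Fin n, rT A i < A (fun _ => i)) :
    ∀ lam : ℝ, IsHEig A lam → 0 < lam := by
  rintro lam ⟨x, hx0, heig⟩
  obtain ⟨j, hj⟩ := Function.ne_iff.mp hx0
  obtain ⟨i, -, hi⟩ := Finset.exists_max_image Finset.univ (fun i => |x i|)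
    ⟨j, Finset.mem_univ j⟩
  have hxi : 0 < |x i| := lt_of_lt_of_le (abs_pos.mpr hj) (hi j (Finset.mem_univ j))
  have hcons : (Fin.cons i (fun _ => i) : Fin (k+1) → Fin n) = fun _ => i := by
    funext a
    cases a using Fin.cases <;> simp
  have hsplit : (∑ α : Fin k → Fin n, A (Fin.cons i α) * ∏ l, x (α l))
      = A (fun _ => i) * (x i)^k
        + ∑ α ∈ Finset.univ.filter (fun α : Fin k → Fin n => α ≠ fun _ => i),
            A (Fin.cons i α) * ∏ l, x (α l) := by
    rw [← Finset.sum_filter_add_sum_filter_not Finset.univ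
      (fun α : Fin k → Fin n => α = fun _ => i)]
    congr 1
    rw [Finset.filter_eq', if_pos (Finset.mem_univ _), Finset.sum_singleton, hcons]
    simp [Finset.prod_const]
  have key : (lam - A (fun _ => i)) * (x i)^k
      = ∑ α ∈ Finset.univ.filter (fun α : Fin k → Fin n => α ≠ fun _ => i),
          A (Fin.cons i α) * ∏ l, x (α l) := by
    have := heig i
    rw [hsplit] at this
    linarith
  have hbound : |lam - A (fun _ => i)| * |x i|^k ≤ rT A i * |x i|^k := by
    rw [← abs_pow, ← abs_mul, key, rT, Finset.sum_mul]
    refine le_trans (Finset.abs_sum_le_sum_abs _ _) (Finset.sum_le_sum fun α _ => ?_)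
    rw [abs_mul]
    refine mul_le_mul_of_nonneg_left ?_ (abs_nonneg _)
    calc |∏ l, x (α l)| = ∏ l, |x (α l)| := Finset.abs_prod _ _
      _ ≤ ∏ _l : Fin k, |x i| :=
          Finset.prod_le_prod (fun _ _ => abs_nonneg _)
            (fun l _ => hi (α l) (Finset.mem_univ _))
      _ = |x i ^ k| := by rw [abs_pow]; simp [Finset.prod_const]
  have hpow : 0 < |x i|^k := pow_pos hxi k
  have h1 : |lam - A (fun _ => i)| ≤ rT A i := le_of_mul_le_mul_right hbound hpow
  have h2 : A (fun _ => i) - lam ≤ |lam - A (fun _ => i)| := by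
    rw [abs_sub_comm]; exact le_abs_self _
  linarith [hdd i]
end

section
/- An even-order quasi-doubly strictly diagonally dominant real symmetric tensor with all positive diagonal entries is positive definite. -/
open Finset

lemma prod_le_aux {m : ℕ} (g : Fin m → ℝ) (u : ℝ) (hg : ∀ l, |g l| ≤ u) :
    |∏ l, g l| ≤ u ^ m := by
  rw [Finset.abs_prod]
  calc ∏ l, |g l| ≤ ∏ _l : Fin m, u :=
        Finset.prod_le_prod (fun _ _ => abs_nonneg _) (fun l _ => hg l)
    _ = u ^ m := by simp

lemma prod_le_aux2 {m : ℕ} (g : Fin (m+1) → ℝ) (u v : ℝ) (hg : ∀ l, |g l| ≤ u)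
    (l0 : Fin (m+1)) (hl0 : |g l0| ≤ v) (hvu : v ≤ u) (hv : 0 ≤ v) :
    |∏ l, g l| ≤ u ^ m * v := by
  have hu : 0 ≤ u := le_trans hv hvu
  rw [Finset.abs_prod, ← Finset.mul_prod_erase _ _ (Finset.mem_univ l0)]
  have hcard : (Finset.univ.erase l0).card = m := by
    simp [Finset.card_erase_of_mem]
  have h2 : ∏ l ∈ Finset.univ.erase l0, |g l| ≤ u ^ m := by
    calc ∏ l ∈ Finset.univ.erase l0, |g l| ≤ ∏ _l ∈ Finset.univ.erase l0, u :=
          Finset.prod_le_prod (fun _ _ => abs_nonneg _) (fun l _ => hg l)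
      _ = u ^ m := by rw [Finset.prod_const, hcard]
  calc |g l0| * ∏ l ∈ Finset.univ.erase l0, |g l| ≤ v * u ^ m :=
        mul_le_mul hl0 h2 (Finset.prod_nonneg (fun _ _ => abs_nonneg _)) hv
    _ = u ^ m * v := mul_comm _ _

lemma sum_split_diag {n k : ℕ} (A : (Fin (k+1) → Fin n) → ℝ) (x : Fin n → ℝ) (i : Fin n) :
    ∑ α : Fin k → Fin n, A (Fin.cons i α) * ∏ l, x (α l)
      = A (fun _ => i) * x i ^ k
        + ∑ α ∈ Finset.univ.filter (fun α : Fin k → Fin n => α ≠ fun _ => i),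
            A (Fin.cons i α) * ∏ l, x (α l) := by
  classical
  rw [← Finset.sum_filter_add_sum_filter_not Finset.univ
      (fun α : Fin k → Fin n => α = fun _ => i)]
  congr 1
  · rw [Finset.filter_eq']
    simp only [Finset.mem_univ, if_true, Finset.sum_singleton]
    have hc : Fin.cons i (fun _ : Fin k => i) = fun _ : Fin (k+1) => i := by
      funext l; exact Fin.cases rfl (fun _ => rfl) l
    rw [hc]
    simp

set_option maxHeartbeats 1000000 in
theorem stmt16 {n k : ℕ} (hn : 2 ≤ n) (hm : Even (k+1))
    (A : (Fin (k+1) → Fin n) → ℝ) (hsym : SymTensor A)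
    (hdiag : ∀ i : Fin n, 0 < A (fun _ => i))
    (hqdd : ∀ i j : Fin n, i ≠ j →
      rT A j * |A (Fin.cons i fun _ => j)| <
        (|A (fun _ => i)| - rTj A i j) * |A (fun _ => j)|) :
    ∀ lam : ℝ, IsHEig A lam → 0 < lam := by
  classical
  rintro lam ⟨x, hx0, heig⟩
  obtain ⟨j, rfl⟩ : ∃ j, k = j + 1 := by
    cases k with
    | zero => simp at hm
    | succ j => exact ⟨j, rfl⟩
  -- max index t
  haveI : Nonempty (Fin n) := ⟨⟨0, by omega⟩⟩
  obtain ⟨t, -, ht⟩ := Finset.exists_max_image Finset.univ (fun i => |x i|) Finset.univ_nonempty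
  have ht : ∀ i, |x i| ≤ |x t| := fun i => ht i (Finset.mem_univ i)
  -- second max index s
  have hne : (Finset.univ.erase t).Nonempty := by
    rw [← Finset.card_pos, Finset.card_erase_of_mem (Finset.mem_univ t), Finset.card_univ,
      Fintype.card_fin]
    omega
  obtain ⟨s, hsmem', hs⟩ := Finset.exists_max_image (Finset.univ.erase t) (fun i => |x i|) hne
  have hst : s ≠ t := (Finset.mem_erase.mp hsmem').1
  have hs : ∀ i, i ≠ t → |x i| ≤ |x s| := fun i hi =>
    hs i (Finset.mem_erase.mpr ⟨hi, Finset.mem_univ i⟩)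
  set u := |x t| with hu
  set v := |x s| with hv
  have hup : 0 < u := by
    obtain ⟨i, hi⟩ := Function.ne_iff.mp hx0
    exact lt_of_lt_of_le (abs_pos.mpr hi) (ht i)
  have hvu : v ≤ u := ht s
  have heq_t := heig t
  rw [sum_split_diag] at heq_t
  set at' := A (fun _ : Fin (j+1+1) => t) with hat'
  set as' := A (fun _ : Fin (j+1+1) => s) with has'
  set S := Finset.univ.filter (fun α : Fin (j+1) → Fin n => α ≠ fun _ => t) with hS
  have key_t : (lam - at') * x t ^ (j+1) = ∑ α ∈ S, A (Fin.cons t α) * ∏ l, x (α l) := by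
    linarith [heq_t]
  rcases eq_or_lt_of_le (abs_nonneg (x s)) with hv0 | hvp
  · -- v = 0 : all off-t coordinates vanish
    have hx_all : ∀ i, i ≠ t → x i = 0 := fun i hi =>
      abs_eq_zero.mp (le_antisymm (le_trans (hs i hi) (le_of_eq hv0.symm)) (abs_nonneg _))
    have hsum0 : ∑ α ∈ S, A (Fin.cons t α) * ∏ l, x (α l) = 0 := by
      apply Finset.sum_eq_zero
      intro α hα
      have hαne : α ≠ fun _ => t := (Finset.mem_filter.mp hα).2
      obtain ⟨l, hl⟩ : ∃ l, α l ≠ t := by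
        by_contra h
        push_neg at h
        exact hαne (funext h)
      have : ∏ l, x (α l) = 0 := Finset.prod_eq_zero (Finset.mem_univ l) (hx_all _ hl)
      rw [this, mul_zero]
    rw [hsum0] at key_t
    have hxt : x t ^ (j+1) ≠ 0 := pow_ne_zero _ (abs_pos.mp hup)
    have : lam = at' := by
      have := mul_eq_zero.mp key_t
      rcases this with h | h
      · linarith [h]
      · exact absurd h hxt
    rw [this]; exact hdiag t
  · -- v > 0 : the main case
    have hvp : 0 < v := hvp
    set B := |A (Fin.cons t fun _ : Fin (j+1) => s)| with hB
    have hsmemS : (fun _ : Fin (j+1) => s) ∈ S := by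
      rw [hS, Finset.mem_filter]
      refine ⟨Finset.mem_univ _, fun h => hst (congrFun h 0)⟩
    -- inequality at t
    have h1 : |lam - at'| * u ^ (j+1)
        ≤ (rT A t - B) * (u ^ j * v) + B * v ^ (j+1) := by
      have habs : |lam - at'| * u ^ (j+1) = |(lam - at') * x t ^ (j+1)| := by
        rw [abs_mul, abs_pow]
      rw [habs, key_t]
      calc |∑ α ∈ S, A (Fin.cons t α) * ∏ l, x (α l)|
          ≤ ∑ α ∈ S, |A (Fin.cons t α) * ∏ l, x (α l)| :=
            Finset.abs_sum_le_sum_abs _ _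
        _ = ∑ α ∈ S, |A (Fin.cons t α)| * |∏ l, x (α l)| := by
            simp [abs_mul]
        _ = |A (Fin.cons t fun _ => s)| * |∏ _l : Fin (j+1), x s|
              + ∑ α ∈ S.erase (fun _ => s), |A (Fin.cons t α)| * |∏ l, x (α l)| :=
            (Finset.add_sum_erase _ _ hsmemS).symm
        _ ≤ B * v ^ (j+1) + (rT A t - B) * (u ^ j * v) := by
            gcongr ?_ + ?_
            · apply le_of_eq
              rw [Finset.abs_prod, Finset.prod_const]
              simp [hB, hv]
            · calc ∑ α ∈ S.erase (fun _ => s), |A (Fin.cons t α)| * |∏ l, x (α l)|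
                  ≤ ∑ α ∈ S.erase (fun _ => s), |A (Fin.cons t α)| * (u ^ j * v) := by
                    apply Finset.sum_le_sum
                    intro α hα
                    have hαne : α ≠ fun _ => t :=
                      (Finset.mem_filter.mp (Finset.mem_of_mem_erase hα)).2
                    obtain ⟨l, hl⟩ : ∃ l, α l ≠ t := by
                      by_contra h
                      push_neg at h
                      exact hαne (funext h)
                    exact mul_le_mul_of_nonneg_left
                      (prod_le_aux2 (fun l => x (α l)) u v (fun l => ht _) l
                        (hs _ hl) hvu hvp.le) (abs_nonneg _)
                _ = (rT A t - B) * (u ^ j * v) := by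
                    rw [← Finset.sum_mul, Finset.sum_erase_eq_sub hsmemS]
                    rfl
        _ = (rT A t - B) * (u ^ j * v) + B * v ^ (j+1) := by ring
    -- inequality at s
    have heq_s := heig s
    rw [sum_split_diag] at heq_s
    set Ss := Finset.univ.filter (fun α : Fin (j+1) → Fin n => α ≠ fun _ => s) with hSs
    have key_s : (lam - as') * x s ^ (j+1) = ∑ α ∈ Ss, A (Fin.cons s α) * ∏ l, x (α l) := by
      linarith [heq_s]
    have h2 : |lam - as'| * v ^ (j+1) ≤ rT A s * u ^ (j+1) := by
      have habs : |lam - as'| * v ^ (j+1) = |(lam - as') * x s ^ (j+1)| := by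
        rw [abs_mul, abs_pow]
      rw [habs, key_s]
      calc |∑ α ∈ Ss, A (Fin.cons s α) * ∏ l, x (α l)|
          ≤ ∑ α ∈ Ss, |A (Fin.cons s α) * ∏ l, x (α l)| :=
            Finset.abs_sum_le_sum_abs _ _
        _ ≤ ∑ α ∈ Ss, |A (Fin.cons s α)| * u ^ (j+1) := by
            apply Finset.sum_le_sum
            intro α hα
            rw [abs_mul]
            exact mul_le_mul_of_nonneg_left (prod_le_aux (fun l => x (α l)) u (fun l => ht _))
              (abs_nonneg _)
        _ = rT A s * u ^ (j+1) := by
            rw [← Finset.sum_mul]; rfl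
    -- arithmetic
    by_contra hlam
    push_neg at hlam
    set R := rT A t - B with hR
    have hBle : B ≤ rT A t := by
      apply Finset.single_le_sum (f := fun α => |A (Fin.cons t α)|)
        (fun _ _ => abs_nonneg _) hsmemS
    have hRnn : 0 ≤ R := by linarith
    have hBnn : 0 ≤ B := abs_nonneg _
    have hrsnn : 0 ≤ rT A s := Finset.sum_nonneg (fun _ _ => abs_nonneg _)
    have hq := hqdd t s (Ne.symm hst)
    rw [abs_of_pos (hdiag t), abs_of_pos (hdiag s)] at hq
    have hq : rT A s * B < (at' - R) * as' := by
      rw [hR, hB, hat', has']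
      simpa [rTj] using hq
    have hatpos := hdiag t
    have haspos := hdiag s
    rw [← hat'] at hatpos
    rw [← has'] at haspos
    have hatR : 0 < at' - R := by nlinarith [mul_nonneg hrsnn hBnn]
    have hU : 0 < u ^ (j+1) := pow_pos hup _
    have hV : 0 < v ^ (j+1) := pow_pos hvp _
    have hWv : u ^ j * v ≤ u ^ (j+1) := by
      calc u ^ j * v ≤ u ^ j * u := by
            exact mul_le_mul_of_nonneg_left hvu (pow_nonneg hup.le j)
        _ = u ^ (j+1) := (pow_succ u j).symm
    have h1' : (at' - lam) * u ^ (j+1) ≤ R * (u ^ j * v) + B * v ^ (j+1) := by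
      have : at' - lam ≤ |lam - at'| := by
        rw [abs_sub_comm]; exact le_abs_self _
      nlinarith [h1, hU]
    have h1'' : (at' - lam - R) * u ^ (j+1) ≤ B * v ^ (j+1) := by
      nlinarith [mul_le_mul_of_nonneg_left hWv hRnn]
    have h2' : (as' - lam) * v ^ (j+1) ≤ rT A s * u ^ (j+1) := by
      have : as' - lam ≤ |lam - as'| := by
        rw [abs_sub_comm]; exact le_abs_self _
      nlinarith [h2, hV]
    have hstep := mul_le_mul h1'' h2'
      (mul_nonneg (by linarith : (0:ℝ) ≤ as' - lam) hV.le)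
      (mul_nonneg hBnn hV.le)
    have e1 : (at' - lam - R) * u ^ (j+1) * ((as' - lam) * v ^ (j+1))
        = (at' - lam - R) * (as' - lam) * (u ^ (j+1) * v ^ (j+1)) := by ring
    have e2 : B * v ^ (j+1) * (rT A s * u ^ (j+1))
        = B * rT A s * (u ^ (j+1) * v ^ (j+1)) := by ring
    rw [e1, e2] at hstep
    have hUV : 0 < u ^ (j+1) * v ^ (j+1) := mul_pos hU hV
    have step2 : (at' - lam - R) * (as' - lam) ≤ B * rT A s :=
      le_of_mul_le_mul_right hstep hUV
    nlinarith [mul_nonneg (neg_nonneg.2 hlam) hatR.le,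
      mul_nonneg (neg_nonneg.2 hlam) haspos.le, sq_nonneg lam]
end

section
/- An even-order S-QDSDD real symmetric tensor with all positive diagonal entries is positive definite. -/
open Finset

lemma myRT_nonneg {n k : ℕ} (A : (Fin (k+1) → Fin n) → ℝ) (i : Fin n) : 0 ≤ rT A i :=
  Finset.sum_nonneg fun _ _ => abs_nonneg _

lemma myCons_const {n k : ℕ} (i : Fin n) :
    (Fin.cons i (fun _ => i) : Fin (k+1) → Fin n) = fun _ => i := by
  funext a; cases a using Fin.cases <;> simp

lemma myEigSplit {n k : ℕ} (A : (Fin (k+1) → Fin n) → ℝ) (lam : ℝ) (x : Fin n → ℝ)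
    (hx : ∀ i, (∑ α : Fin k → Fin n, A (Fin.cons i α) * ∏ l, x (α l)) = lam * (x i) ^ k)
    (i : Fin n) :
    |lam - A (fun _ => i)| * |x i| ^ k ≤
      ∑ α ∈ Finset.univ.filter (fun α : Fin k → Fin n => α ≠ fun _ => i),
        |A (Fin.cons i α)| * ∏ l, |x (α l)| := by
  have hsplit : (lam - A (fun _ => i)) * x i ^ k =
      ∑ α ∈ Finset.univ.filter (fun α : Fin k → Fin n => α ≠ fun _ => i),
        A (Fin.cons i α) * ∏ l, x (α l) := by
    rw [Finset.filter_ne', Finset.sum_erase_eq_sub (Finset.mem_univ _), hx i, myCons_const]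
    simp [Finset.prod_const]
    ring
  calc |lam - A (fun _ => i)| * |x i| ^ k
      = |(lam - A (fun _ => i)) * x i ^ k| := by rw [abs_mul, abs_pow]
    _ = |∑ α ∈ Finset.univ.filter (fun α : Fin k → Fin n => α ≠ fun _ => i),
          A (Fin.cons i α) * ∏ l, x (α l)| := by rw [hsplit]
    _ ≤ ∑ α ∈ Finset.univ.filter (fun α : Fin k → Fin n => α ≠ fun _ => i),
          |A (Fin.cons i α) * ∏ l, x (α l)| := Finset.abs_sum_le_sum_abs _ _
    _ = ∑ α ∈ Finset.univ.filter (fun α : Fin k → Fin n => α ≠ fun _ => i),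
          |A (Fin.cons i α)| * ∏ l, |x (α l)| := by
        refine Finset.sum_congr rfl fun α _ => ?_
        rw [abs_mul, Finset.abs_prod]

lemma myKey {n k : ℕ} (hk : k ≠ 0) (A : (Fin (k+1) → Fin n) → ℝ) (lam : ℝ)
    (hlam : lam ≤ 0) (x : Fin n → ℝ)
    (hx : ∀ i, (∑ α : Fin k → Fin n, A (Fin.cons i α) * ∏ l, x (α l)) = lam * (x i) ^ k)
    (t j : Fin n) (htj : j ≠ t)
    (hmax : ∀ i, |x i| ≤ |x t|) (hxt : 0 < |x t|)
    (hdiag : ∀ i : Fin n, 0 < A (fun _ => i))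
    (hineq : rT A j * |A (Fin.cons t fun _ => j)| <
        (|A (fun _ => t)| - rTj A t j) * |A (fun _ => j)|) : False := by
  haveI : Nonempty (Fin k) := ⟨⟨0, Nat.pos_of_ne_zero hk⟩⟩
  set P := |x t| ^ k with hPdef
  have hP : 0 < P := pow_pos hxt k
  set X := |x j| ^ k with hXdef
  have hX : 0 ≤ X := pow_nonneg (abs_nonneg _) k
  -- membership of the constant-j tuple
  have hjmem : (fun _ => j : Fin k → Fin n) ∈
      Finset.univ.filter (fun α : Fin k → Fin n => α ≠ fun _ => t) := by
    simp only [Finset.mem_filter, Finset.mem_univ, true_and]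
    intro h
    exact htj (congrFun h (Classical.arbitrary _))
  -- prod bound
  have hprod : ∀ α : Fin k → Fin n, (∏ l, |x (α l)|) ≤ P := by
    intro α
    calc (∏ l, |x (α l)|) ≤ ∏ _l : Fin k, |x t| :=
          Finset.prod_le_prod (fun _ _ => abs_nonneg _) (fun l _ => hmax (α l))
      _ = P := by simp [hPdef, Finset.prod_const]
  -- inequality at t
  have h1 : |lam - A (fun _ => t)| * P ≤
      rTj A t j * P + |A (Fin.cons t fun _ => j)| * X := by
    have h0 := myEigSplit A lam x hx t
    rw [← Finset.add_sum_erase _ _ hjmem] at h0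
    have hrest : ∑ α ∈ (Finset.univ.filter
          (fun α : Fin k → Fin n => α ≠ fun _ => t)).erase (fun _ => j),
          |A (Fin.cons t α)| * ∏ l, |x (α l)| ≤ rTj A t j * P := by
      have hsum : ∑ α ∈ (Finset.univ.filter
            (fun α : Fin k → Fin n => α ≠ fun _ => t)).erase (fun _ => j),
            |A (Fin.cons t α)| = rTj A t j := by
        rw [Finset.sum_erase_eq_sub hjmem, rTj, rT]
      calc ∑ α ∈ (Finset.univ.filter
            (fun α : Fin k → Fin n => α ≠ fun _ => t)).erase (fun _ => j),
            |A (Fin.cons t α)| * ∏ l, |x (α l)|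
          ≤ ∑ α ∈ (Finset.univ.filter
            (fun α : Fin k → Fin n => α ≠ fun _ => t)).erase (fun _ => j),
            |A (Fin.cons t α)| * P :=
            Finset.sum_le_sum fun α _ =>
              mul_le_mul_of_nonneg_left (hprod α) (abs_nonneg _)
        _ = rTj A t j * P := by rw [← Finset.sum_mul, hsum]
    have hj0 : |A (Fin.cons t fun _ => j)| * (∏ _l : Fin k, |x j|) =
        |A (Fin.cons t fun _ => j)| * X := by
      simp [hXdef, Finset.prod_const]
    calc |lam - A (fun _ => t)| * P
        ≤ |A (Fin.cons t fun _ => j)| * (∏ l, |x ((fun _ => j : Fin k → Fin n) l)|) +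
          ∑ α ∈ (Finset.univ.filter
            (fun α : Fin k → Fin n => α ≠ fun _ => t)).erase (fun _ => j),
            |A (Fin.cons t α)| * ∏ l, |x (α l)| := h0
      _ ≤ |A (Fin.cons t fun _ => j)| * X + rTj A t j * P := by
          rw [show (∏ l, |x ((fun _ => j : Fin k → Fin n) l)|) = X by
            simp [hXdef, Finset.prod_const]]
          linarith [hrest]
      _ = rTj A t j * P + |A (Fin.cons t fun _ => j)| * X := by ring
  -- inequality at j
  have h2 : |lam - A (fun _ => j)| * X ≤ rT A j * P := by
    have h0 := myEigSplit A lam x hx j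
    calc |lam - A (fun _ => j)| * X
        ≤ ∑ α ∈ Finset.univ.filter (fun α : Fin k → Fin n => α ≠ fun _ => j),
            |A (Fin.cons j α)| * ∏ l, |x (α l)| := h0
      _ ≤ ∑ α ∈ Finset.univ.filter (fun α : Fin k → Fin n => α ≠ fun _ => j),
            |A (Fin.cons j α)| * P :=
          Finset.sum_le_sum fun α _ =>
            mul_le_mul_of_nonneg_left (hprod α) (abs_nonneg _)
      _ = rT A j * P := by rw [← Finset.sum_mul, rT]
  -- numeric endgame
  have hat : 0 < A (fun _ => t) := hdiag t
  have haj : 0 < A (fun _ => j) := hdiag j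
  have habs_t : |lam - A (fun _ => t)| = A (fun _ => t) - lam := by
    rw [abs_of_nonpos (by linarith)]; ring
  have habs_j : |lam - A (fun _ => j)| = A (fun _ => j) - lam := by
    rw [abs_of_nonpos (by linarith)]; ring
  rw [habs_t] at h1
  rw [habs_j] at h2
  rw [abs_of_pos hat, abs_of_pos haj] at hineq
  set a := A (fun _ => t)
  set c := A (fun _ => j)
  set r := rT A j with hrdef
  set r' := rTj A t j
  set b := |A (Fin.cons t fun _ => j)|
  have hb : 0 ≤ b := abs_nonneg _
  have hr : 0 ≤ r := myRT_nonneg A j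
  have har' : 0 < a - r' := by nlinarith [mul_nonneg hr hb]
  rcases hX.eq_or_lt with hX0 | hX'
  · nlinarith
  · have h1' : (a - lam - r') * P ≤ b * X := by linarith
    have h2' : (c - lam) * X ≤ r * P := h2
    have hmul : ((a - lam - r') * P) * ((c - lam) * X) ≤ (b * X) * (r * P) :=
      mul_le_mul h1' h2' (mul_nonneg (by linarith) hX) (mul_nonneg hb hX)
    have hstep2 : (r * b) * (P * X) < ((a - r') * c) * (P * X) :=
      mul_lt_mul_of_pos_right hineq (mul_pos hP hX')
    nlinarith [hmul, hstep2, mul_nonneg (mul_nonneg (neg_nonneg.2 hlam) har'.le)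
        (mul_pos hP hX').le,
      mul_nonneg (mul_nonneg (neg_nonneg.2 hlam) (by linarith : (0:ℝ) ≤ c - lam))
        (mul_pos hP hX').le]

theorem stmt17 {n k : ℕ} (hn : 2 ≤ n) (hm : Even (k+1))
    (A : (Fin (k+1) → Fin n) → ℝ) (hsym : SymTensor A)
    (S : Finset (Fin n)) (hS : S.Nonempty) (hS' : S ≠ Finset.univ)
    (hdiag : ∀ i : Fin n, 0 < A (fun _ => i))
    (hqd : ∀ i ∈ S, ∀ j ∈ Sᶜ,
      rT A j * |A (Fin.cons i fun _ => j)| <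
        (|A (fun _ => i)| - rTj A i j) * |A (fun _ => j)| ∧
      rT A i * |A (Fin.cons j fun _ => i)| <
        (|A (fun _ => j)| - rTj A j i) * |A (fun _ => i)|) :
    ∀ lam : ℝ, IsHEig A lam → 0 < lam := by
  rintro lam ⟨x, hx0, hx⟩
  by_contra hl
  push_neg at hl
  have hk : k ≠ 0 := by rintro rfl; exact Nat.not_even_one hm
  haveI : NeZero n := ⟨by omega⟩
  obtain ⟨t, -, hmax⟩ := Finset.exists_max_image Finset.univ (fun i => |x i|)
    (Finset.univ_nonempty)
  have hmax' : ∀ i, |x i| ≤ |x t| := fun i => hmax i (Finset.mem_univ i)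
  have hxt : 0 < |x t| := by
    obtain ⟨i, hi⟩ := Function.ne_iff.mp hx0
    have : 0 < |x i| := abs_pos.mpr hi
    linarith [hmax' i]
  by_cases ht : t ∈ S
  · obtain ⟨j, hj⟩ : ∃ j, j ∈ Sᶜ := by
      by_contra h
      push_neg at h
      exact hS' (Finset.eq_univ_iff_forall.2 fun i => by
        have := h i; simpa [Finset.mem_compl] using this)
    have hjt : j ≠ t := fun h => (Finset.mem_compl.mp hj) (h ▸ ht)
    exact myKey hk A lam hl x hx t j hjt hmax' hxt hdiag (hqd t ht j hj).1
  · obtain ⟨i, hi⟩ := hS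
    have hit : i ≠ t := fun h => ht (h ▸ hi)
    exact myKey hk A lam hl x hx t i hit hmax' hxt hdiag
      (hqd i hi t (Finset.mem_compl.mpr ht)).2
end
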